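/- Let f, f̂ : ℝ → ℝ be twice differentiable with f > 0 and f̂ > 0 everywhere, let r₀, K₀ be real constants with 0 < K₀, and let r̂ : ℝ → ℝ be twice differentiable with r̂'(t) ≠ 0 for all t. Suppose (f'(t + r₀)/f(t + r₀))·r̂'(t) = f̂'(r̂(t))/f̂(r̂(t)) and r̂'(t)² + K₀/f̂(r̂(t))² = 1 for all t. Then f̂''(r̂(t))/f̂(r̂(t)) = f''(t + r₀)/f(t + r₀) for all t. -/

import Mathlib

/-- Equation (eq:ss12:warping_functions:3): from the first-order relation between
the warping functions along the lifted geodesic together with the unit-speed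
relation, the quotients `f̂''/f̂` and `f''/f` agree at corresponding parameters. -/
theorem warping_functions_second_order (f fh : ℝ → ℝ) (r₀ K₀ : ℝ) (rh : ℝ → ℝ)
    (hf : Differentiable ℝ f) (hf' : Differentiable ℝ (deriv f))
    (hfh : Differentiable ℝ fh) (hfh' : Differentiable ℝ (deriv fh))
    (hfpos : ∀ x, 0 < f x) (hfhpos : ∀ x, 0 < fh x)
    (hK : 0 < K₀)
    (hrh : Differentiable ℝ rh) (hrh' : Differentiable ℝ (deriv rh))
    (hne : ∀ t, deriv rh t ≠ 0)
    (h1 : ∀ t, (deriv f (t + r₀) / f (t + r₀)) * deriv rh t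
        = deriv fh (rh t) / fh (rh t))
    (h2 : ∀ t, (deriv rh t) ^ 2 + K₀ / (fh (rh t)) ^ 2 = 1) :
    ∀ t, deriv (deriv fh) (rh t) / fh (rh t)
        = deriv (deriv f) (t + r₀) / f (t + r₀) := by
  intro t
  set a := f (t + r₀) with ha
  set a' := deriv f (t + r₀) with ha'
  set a'' := deriv (deriv f) (t + r₀) with ha''
  set b := fh (rh t) with hb
  set b' := deriv fh (rh t) with hb'
  set b'' := deriv (deriv fh) (rh t) with hb''
  set p := deriv rh t with hp
  set q := deriv (deriv rh) t with hq
  have hane : a ≠ 0 := (hfpos _).ne'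
  have hbne : b ≠ 0 := (hfhpos _).ne'
  have hpne : p ≠ 0 := hne t
  -- basic HasDerivAt facts
  have hid : HasDerivAt (fun s : ℝ => s + r₀) 1 t := (hasDerivAt_id t).add_const r₀
  have hA : HasDerivAt (fun s => f (s + r₀)) a' t := by
    have := (hf (t + r₀)).hasDerivAt.comp t hid
    rw [mul_one] at this
    exact this
  have hA' : HasDerivAt (fun s => deriv f (s + r₀)) a'' t := by
    have := (hf' (t + r₀)).hasDerivAt.comp t hid
    rw [mul_one] at this
    exact this
  have hR : HasDerivAt rh p t := (hrh t).hasDerivAt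
  have hR' : HasDerivAt (deriv rh) q t := (hrh' t).hasDerivAt
  have hB : HasDerivAt (fun s => fh (rh s)) (b' * p) t :=
    (hfh (rh t)).hasDerivAt.comp t hR
  have hB' : HasDerivAt (fun s => deriv fh (rh s)) (b'' * p) t :=
    (hfh' (rh t)).hasDerivAt.comp t hR
  -- differentiate h1
  have hF : HasDerivAt (fun s => deriv f (s + r₀) / f (s + r₀) * deriv rh s)
      ((a'' * a - a' * a') / a ^ 2 * p + a' / a * q) t :=
    (hA'.div hA hane).mul hR'
  have hG : HasDerivAt (fun s => deriv fh (rh s) / fh (rh s))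
      ((b'' * p * b - b' * (b' * p)) / b ^ 2) t := hB'.div hB hbne
  have hfun1 : (fun s => deriv f (s + r₀) / f (s + r₀) * deriv rh s)
      = fun s => deriv fh (rh s) / fh (rh s) := funext fun s => h1 s
  rw [hfun1] at hF
  have E3 : (a'' * a - a' * a') / a ^ 2 * p + a' / a * q
      = (b'' * p * b - b' * (b' * p)) / b ^ 2 := hF.unique hG
  -- differentiate h2
  have hS : HasDerivAt (fun s => (deriv rh s) ^ 2 + K₀ / (fh (rh s)) ^ 2)
      ((2 : ℕ) * p ^ 1 * q + (0 * b ^ 2 - K₀ * ((2 : ℕ) * b ^ 1 * (b' * p))) / (b ^ 2) ^ 2)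
      t := by
    exact (hR'.pow 2).add ((hasDerivAt_const t K₀).div (hB.pow 2) (pow_ne_zero 2 hbne))
  have hfun2 : (fun s => (deriv rh s) ^ 2 + K₀ / (fh (rh s)) ^ 2) = fun _ => (1 : ℝ) :=
    funext fun s => h2 s
  rw [hfun2] at hS
  have E4 : (2 : ℕ) * p ^ 1 * q + (0 * b ^ 2 - K₀ * ((2 : ℕ) * b ^ 1 * (b' * p))) / (b ^ 2) ^ 2
      = 0 := hS.unique (hasDerivAt_const t 1)
  have E1 : a' / a * p = b' / b := h1 t
  have E2 : p ^ 2 + K₀ / b ^ 2 = 1 := h2 t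
  -- algebra
  push_cast at E3 E4
  field_simp at E1 E2 E3 E4 ⊢
  have h2p : 2 * p * (q * b ^ 4 - K₀ * (b * b')) = 0 := by linear_combination b * E4
  have hq4 : q * b ^ 4 = K₀ * (b * b') := by
    have := (mul_eq_zero.mp h2p).resolve_left (mul_ne_zero two_ne_zero hpne)
    linarith
  have hqb : q * b = b' - p ^ 2 * b' := by
    have hb3 : (b : ℝ) ^ 3 ≠ 0 := pow_ne_zero _ hbne
    apply mul_right_cancel₀ hb3
    linear_combination hq4 + (b * b') * E2
  have hmul : p * a ^ 2 * b ^ 2 ≠ 0 :=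
    mul_ne_zero (mul_ne_zero hpne (pow_ne_zero _ hane)) (pow_ne_zero _ hbne)
  have key : b'' * a * (p * a ^ 2 * b ^ 2) = a'' * b * (p * a ^ 2 * b ^ 2) := by
    linear_combination (-(a * b)) * E3 + (a' * a ^ 2 * b ^ 2) * hqb
      + (-(a * a' * b ^ 2) - a ^ 2 * b * p * b') * E1
  exact mul_right_cancel₀ hmul (by linear_combination key)
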